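/- Consider the FJ model over a random graph G drawn from RG(V,Ψ), with stubbornness θ ∈ (0,1) on V_s and 0 on V_r, and M = (I-Θ)^{-1}Θ D + D - A. Assume every non-stubborn agent has positive expected stubborn degree (ψ_{ij} > 0 for some j ∈ V_s). Then with probability at least 1 - n_s e^{-δ^s/8} - n_r e^{-δ^{rs}/8}, the minimum eigenvalue of M satisfies λ_min(M) ≥ (θ δ^s δ^{rs}/2) / (δ^s + (1-θ)δ^{rs}). -/

import Mathlib

open Matrix MeasureTheory ProbabilityTheory


lemma bern_indicator {Ω : Type*} (X : Ω → ℝ) (hv : ∀ ω, X ω = 0 ∨ X ω = 1) :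
    X = Set.indicator {ω | X ω = 1} (fun _ => (1:ℝ)) := by
  funext ω
  rcases hv ω with h | h <;> simp [Set.indicator_apply, h]

lemma bern_exp_eq {Ω : Type*} (X : Ω → ℝ) (hv : ∀ ω, X ω = 0 ∨ X ω = 1) (t : ℝ) :
    (fun ω => Real.exp (t * X ω)) = fun ω => 1 + (Real.exp t - 1) * X ω := by
  funext ω
  rcases hv ω with h | h <;> simp [h]

lemma bern_integrable {Ω : Type*} [MeasurableSpace Ω] (μ : Measure Ω) [IsProbabilityMeasure μ]
    (X : Ω → ℝ) (hX : Measurable X) (hv : ∀ ω, X ω = 0 ∨ X ω = 1) :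
    Integrable X μ := by
  rw [bern_indicator X hv]
  exact (integrable_const 1).indicator (hX (measurableSet_singleton 1))

lemma bern_exp_integrable {Ω : Type*} [MeasurableSpace Ω] (μ : Measure Ω) [IsProbabilityMeasure μ]
    (X : Ω → ℝ) (hX : Measurable X) (hv : ∀ ω, X ω = 0 ∨ X ω = 1) (t : ℝ) :
    Integrable (fun ω => Real.exp (t * X ω)) μ := by
  rw [bern_exp_eq X hv]
  exact (integrable_const 1).add ((bern_integrable μ X hX hv).const_mul _)

lemma bern_integral {Ω : Type*} [MeasurableSpace Ω] (μ : Measure Ω) [IsProbabilityMeasure μ]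
    (X : Ω → ℝ) (hX : Measurable X) (hv : ∀ ω, X ω = 0 ∨ X ω = 1)
    (p : ℝ) (hp0 : 0 ≤ p) (hp : μ {ω | X ω = 1} = ENNReal.ofReal p) :
    ∫ ω, X ω ∂μ = p := by
  have hs : MeasurableSet {ω | X ω = 1} := hX (measurableSet_singleton 1)
  have h1 : (fun ω => X ω) = Set.indicator {ω | X ω = 1} (fun _ => (1:ℝ)) :=
    bern_indicator X hv
  rw [h1, integral_indicator hs, setIntegral_const, measureReal_def, hp, ENNReal.toReal_ofReal hp0]
  simp

lemma bern_mgf {Ω : Type*} [MeasurableSpace Ω] (μ : Measure Ω) [IsProbabilityMeasure μ]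
    (X : Ω → ℝ) (hX : Measurable X) (hv : ∀ ω, X ω = 0 ∨ X ω = 1)
    (p : ℝ) (hp0 : 0 ≤ p) (hp : μ {ω | X ω = 1} = ENNReal.ofReal p) (t : ℝ) :
    mgf X μ t = 1 + (Real.exp t - 1) * p := by
  rw [mgf]
  simp only [bern_exp_eq X hv t]
  rw [integral_add (integrable_const 1) ((bern_integrable μ X hX hv).const_mul _),
    integral_const, integral_const_mul, bern_integral μ X hX hv p hp0 hp]
  simp

lemma chernoff_le {Ω ι : Type*} [MeasurableSpace Ω] (μ : Measure Ω) [IsProbabilityMeasure μ]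
    (X : ι → Ω → ℝ) (hind : iIndepFun X μ)
    (hmeas : ∀ i, Measurable (X i)) (hv : ∀ i ω, X i ω = 0 ∨ X i ω = 1)
    (p : ι → ℝ) (hp01 : ∀ i, p i ∈ Set.Icc (0:ℝ) 1)
    (hp : ∀ i, μ {ω | X i ω = 1} = ENNReal.ofReal (p i))
    (s : Finset ι) :
    (μ {ω | (∑ i ∈ s, X i) ω ≤ (∑ i ∈ s, p i) / 2}).toReal
      ≤ Real.exp (-((1 - Real.log 2) / 2) * ∑ i ∈ s, p i) := by
  set m := ∑ i ∈ s, p i with hm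
  set t : ℝ := -Real.log 2 with htdef
  have ht : t ≤ 0 := neg_nonpos.mpr (Real.log_nonneg one_le_two)
  have hmgf : ∀ i, mgf (X i) μ t = 1 - p i / 2 := by
    intro i
    rw [bern_mgf μ (X i) (hmeas i) (hv i) (p i) (hp01 i).1 (hp i) t, htdef,
      Real.exp_neg, Real.exp_log two_pos]
    ring
  have h_int : ∀ i ∈ s, Integrable (fun ω => Real.exp (t * X i ω)) μ := fun i _ =>
    bern_exp_integrable μ (X i) (hmeas i) (hv i) t
  calc (μ {ω | (∑ i ∈ s, X i) ω ≤ m / 2}).toReal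
      ≤ Real.exp (-t * (m / 2)) * mgf (∑ i ∈ s, X i) μ t :=
        measure_le_le_exp_mul_mgf (m/2) ht (hind.integrable_exp_mul_sum hmeas h_int)
    _ = Real.exp (-t * (m / 2)) * ∏ i ∈ s, mgf (X i) μ t := by rw [hind.mgf_sum hmeas]
    _ ≤ Real.exp (-t * (m / 2)) * ∏ i ∈ s, Real.exp (-(p i) / 2) := by
        refine mul_le_mul_of_nonneg_left (Finset.prod_le_prod ?_ ?_) (Real.exp_pos _).le
        · intro i _
          rw [hmgf i]
          have := (hp01 i).2
          linarith
        · intro i _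
          rw [hmgf i]
          have := Real.add_one_le_exp (-(p i) / 2)
          linarith
    _ = Real.exp (-t * (m / 2)) * Real.exp (-m / 2) := by
        rw [← Real.exp_sum]
        congr 1
        rw [hm, ← Finset.sum_div, Finset.sum_neg_distrib]
    _ = Real.exp (-((1 - Real.log 2) / 2) * m) := by
        rw [← Real.exp_add, htdef]
        ring_nf


lemma pair_sum {n : ℕ} (i : Fin n) (T : Finset (Fin n)) (g : Fin n → Fin n → ℝ)
    (hsym : ∀ a b, g a b = g b a) (hdiag : g i i = 0) :
    ∑ q ∈ Finset.univ.filter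
        (fun q : {p : Fin n × Fin n // p.1 < p.2} =>
          (q.1.1 = i ∧ q.1.2 ∈ T) ∨ (q.1.2 = i ∧ q.1.1 ∈ T)),
      g q.1.1 q.1.2 = ∑ j ∈ T, g i j := by
  classical
  have key := Finset.sum_subtype_eq_sum_filter
    (s := (Finset.univ : Finset (Fin n × Fin n)))
    (fun p : Fin n × Fin n =>
      if (p.1 = i ∧ p.2 ∈ T) ∨ (p.2 = i ∧ p.1 ∈ T) then g p.1 p.2 else 0)
    (p := fun p => p.1 < p.2)
  rw [Finset.subtype_univ] at key
  have step1 : ∑ q ∈ Finset.univ.filter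
        (fun q : {p : Fin n × Fin n // p.1 < p.2} =>
          (q.1.1 = i ∧ q.1.2 ∈ T) ∨ (q.1.2 = i ∧ q.1.1 ∈ T)),
      g q.1.1 q.1.2
      = ∑ p ∈ (Finset.univ : Finset (Fin n × Fin n)).filter
          (fun p => p.1 < p.2 ∧ ((p.1 = i ∧ p.2 ∈ T) ∨ (p.2 = i ∧ p.1 ∈ T))),
        g p.1 p.2 := by
    rw [Finset.sum_filter, key, Finset.sum_filter, Finset.sum_filter]
    refine Finset.sum_congr rfl fun p _ => ?_
    by_cases h : p.1 < p.2 <;>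
      by_cases h2 : ((p.1 = i ∧ p.2 ∈ T) ∨ (p.2 = i ∧ p.1 ∈ T)) <;> simp [h, h2]
  rw [step1, ← Finset.sum_erase T hdiag]
  refine Finset.sum_nbij' (fun p => if p.1 = i then p.2 else p.1)
    (fun j => if i < j then (i, j) else (j, i)) ?_ ?_ ?_ ?_ ?_
  · rintro ⟨x, y⟩ hq
    simp only [Finset.mem_filter, Finset.mem_univ, true_and] at hq
    obtain ⟨hxy, hq⟩ := hq
    rcases hq with ⟨h1, h2⟩ | ⟨h1, h2⟩
    · simp only [if_pos h1]
      exact Finset.mem_erase.mpr ⟨(h1 ▸ hxy).ne', h2⟩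
    · have hx : x ≠ i := by rintro rfl; rw [h1] at hxy; exact lt_irrefl _ hxy
      simp only [if_neg hx]
      exact Finset.mem_erase.mpr ⟨hx, h2⟩
  · intro j hj
    obtain ⟨hne, hmem⟩ := Finset.mem_erase.mp hj
    by_cases h : i < j
    · rw [if_pos h]
      exact Finset.mem_filter.mpr ⟨Finset.mem_univ _, h, Or.inl ⟨rfl, hmem⟩⟩
    · rw [if_neg h]
      exact Finset.mem_filter.mpr
        ⟨Finset.mem_univ _, lt_of_le_of_ne (not_lt.mp h) hne, Or.inr ⟨rfl, hmem⟩⟩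
  · rintro ⟨x, y⟩ hq
    simp only [Finset.mem_filter, Finset.mem_univ, true_and] at hq
    obtain ⟨hxy, hq⟩ := hq
    rcases hq with ⟨h1, h2⟩ | ⟨h1, h2⟩
    · subst h1
      simp [hxy]
    · have hx : x ≠ i := by rintro rfl; rw [h1] at hxy; exact lt_irrefl _ hxy
      subst h1
      simp [hx, not_lt.mpr hxy.le]
  · intro j hj
    obtain ⟨hne, _⟩ := Finset.mem_erase.mp hj
    by_cases h : i < j
    · simp [if_pos h]
    · simp [if_neg h, hne]
  · rintro ⟨x, y⟩ hq
    simp only [Finset.mem_filter, Finset.mem_univ, true_and] at hq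
    obtain ⟨hxy, hq⟩ := hq
    rcases hq with ⟨h1, h2⟩ | ⟨h1, h2⟩
    · simp only [if_pos h1]
      rw [h1]
    · have hx : x ≠ i := by rintro rfl; rw [h1] at hxy; exact lt_irrefl _ hxy
      simp only [if_neg hx]
      rw [h1]
      exact hsym x i


lemma eigen_lb {m : ℕ} (A : Matrix (Fin m) (Fin m) ℝ) (hA : A.IsHermitian) (c : ℝ)
    (h : ∀ x : Fin m → ℝ, c * ∑ i, x i ^ 2 ≤ x ⬝ᵥ (A *ᵥ x)) (k : Fin m) :
    c ≤ hA.eigenvalues k := by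
  have hv := hA.mulVec_eigenvectorBasis k
  set v : EuclideanSpace ℝ (Fin m) := hA.eigenvectorBasis k with hvdef
  have hn1 : ‖v‖ = 1 := hA.eigenvectorBasis.orthonormal.1 k
  have h2 : (inner ℝ v v : ℝ) = 1 := by
    rw [real_inner_self_eq_norm_sq, hn1]; norm_num
  have hnorm : ∑ i, (v i) ^ 2 = 1 := by
    rw [← h2, PiLp.inner_apply]
    simp [RCLike.inner_apply, sq]
  have hv' : A *ᵥ (v : Fin m → ℝ) = hA.eigenvalues k • (v : Fin m → ℝ) := hv
  have hq := h v
  rw [hv'] at hq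
  have hdp : (v : Fin m → ℝ) ⬝ᵥ (hA.eigenvalues k • (v : Fin m → ℝ))
      = hA.eigenvalues k * ∑ i, (v i) ^ 2 := by
    rw [dotProduct_smul]
    simp [dotProduct, Finset.mul_sum, sq]
  rw [hdp, hnorm] at hq
  simpa using hq.trans_eq (mul_one _)


lemma quad_bound {n : ℕ} (S : Finset (Fin n)) (A : Fin n → Fin n → ℝ)
    (hA0 : ∀ i j, 0 ≤ A i j) (hAsymm : ∀ i j, A i j = A j i)
    (θ a b : ℝ) (hθ0 : 0 < θ) (hθ1 : θ < 1) (ha : 0 < a) (hb : 0 < b)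
    (hdS : ∀ i ∈ S, a ≤ ∑ j, A i j) (hdR : ∀ i ∈ Sᶜ, b ≤ ∑ j ∈ S, A i j)
    (x : Fin n → ℝ) :
    θ * a * b / (a + (1 - θ) * b) * ∑ i, x i ^ 2 ≤
      (∑ i ∈ S, θ / (1 - θ) * (∑ j, A i j) * x i ^ 2)
        + (1/2) * ∑ i, ∑ j, A i j * (x i - x j) ^ 2 := by
  have h1θ : 0 < 1 - θ := by linarith
  have hD : 0 < a + (1 - θ) * b := by nlinarith
  set Q := ∑ i ∈ S, x i ^ 2 with hQ
  set P := ∑ i ∈ Sᶜ, x i ^ 2 with hP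
  set V := ∑ i ∈ S, (∑ j, A i j) * x i ^ 2 with hV
  set R := ∑ i ∈ Sᶜ, ∑ j ∈ S, A i j * (x i - x j) ^ 2 with hR
  set T := ∑ i, ∑ j, A i j * (x i - x j) ^ 2 with hT
  -- key scalar inequality
  have key : ∀ u v : ℝ, θ * (1 - θ) * u ^ 2 ≤ (1 - θ) * (u - v) ^ 2 + θ * v ^ 2 := by
    intro u v
    nlinarith [sq_nonneg ((1 - θ) * (u - v) - θ * v)]
  -- step A pointwise on Sᶜ
  have stepA : ∀ i ∈ Sᶜ, θ * (1 - θ) * b * x i ^ 2 ≤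
      (1 - θ) * (∑ j ∈ S, A i j * (x i - x j) ^ 2) + θ * (∑ j ∈ S, A i j * x j ^ 2) := by
    intro i hi
    calc θ * (1 - θ) * b * x i ^ 2
        ≤ θ * (1 - θ) * ((∑ j ∈ S, A i j) * x i ^ 2) := by
          nlinarith [mul_nonneg (mul_nonneg (mul_pos hθ0 h1θ).le
            (sub_nonneg.mpr (hdR i hi))) (sq_nonneg (x i))]
      _ = ∑ j ∈ S, θ * (1 - θ) * (A i j * x i ^ 2) := by
          rw [Finset.sum_mul, Finset.mul_sum]
      _ ≤ ∑ j ∈ S, A i j * ((1 - θ) * (x i - x j) ^ 2 + θ * x j ^ 2) := by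
          refine Finset.sum_le_sum fun j _ => ?_
          nlinarith [mul_le_mul_of_nonneg_left (key (x i) (x j)) (hA0 i j)]
      _ = (1 - θ) * (∑ j ∈ S, A i j * (x i - x j) ^ 2) + θ * (∑ j ∈ S, A i j * x j ^ 2) := by
          rw [Finset.mul_sum, Finset.mul_sum, ← Finset.sum_add_distrib]
          exact Finset.sum_congr rfl fun j _ => by ring
  -- summed version
  have hsum : θ * (1 - θ) * b * P ≤ (1 - θ) * R + θ * ∑ i ∈ Sᶜ, ∑ j ∈ S, A i j * x j ^ 2 := by
    have := Finset.sum_le_sum stepA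
    calc θ * (1 - θ) * b * P = ∑ i ∈ Sᶜ, θ * (1 - θ) * b * x i ^ 2 := by
          rw [hP, Finset.mul_sum]
      _ ≤ ∑ i ∈ Sᶜ, ((1 - θ) * (∑ j ∈ S, A i j * (x i - x j) ^ 2)
            + θ * (∑ j ∈ S, A i j * x j ^ 2)) := this
      _ = (1 - θ) * R + θ * ∑ i ∈ Sᶜ, ∑ j ∈ S, A i j * x j ^ 2 := by
          rw [Finset.sum_add_distrib, hR, Finset.mul_sum, Finset.mul_sum]
  have hWV : ∑ i ∈ Sᶜ, ∑ j ∈ S, A i j * x j ^ 2 ≤ V := by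
    rw [Finset.sum_comm]
    refine Finset.sum_le_sum fun j hj => ?_
    have h1 : ∑ i ∈ Sᶜ, A i j * x j ^ 2 = (∑ i ∈ Sᶜ, A j i) * x j ^ 2 := by
      rw [Finset.sum_mul]
      exact Finset.sum_congr rfl fun i _ => by rw [hAsymm i j]
    rw [h1]
    refine mul_le_mul_of_nonneg_right ?_ (sq_nonneg _)
    exact Finset.sum_le_sum_of_subset_of_nonneg (Finset.subset_univ _)
      (fun i _ _ => hA0 j i)
  have hsum2 : θ * (1 - θ) * b * P ≤ (1 - θ) * R + θ * V := by
    have := mul_le_mul_of_nonneg_left hWV hθ0.le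
    linarith
  -- 2R ≤ T
  have hRT : 2 * R ≤ T := by
    have hsplit : T = (∑ i ∈ S, ∑ j, A i j * (x i - x j) ^ 2)
        + ∑ i ∈ Sᶜ, ∑ j, A i j * (x i - x j) ^ 2 := by
      rw [hT, Finset.sum_add_sum_compl]
    have h1 : R ≤ ∑ i ∈ Sᶜ, ∑ j, A i j * (x i - x j) ^ 2 := by
      refine Finset.sum_le_sum fun i _ => ?_
      exact Finset.sum_le_sum_of_subset_of_nonneg (Finset.subset_univ _)
        (fun j _ _ => mul_nonneg (hA0 i j) (sq_nonneg _))
    have h2 : R ≤ ∑ i ∈ S, ∑ j, A i j * (x i - x j) ^ 2 := by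
      have hR' : R = ∑ i ∈ S, ∑ j ∈ Sᶜ, A i j * (x i - x j) ^ 2 := by
        rw [hR, Finset.sum_comm]
        refine Finset.sum_congr rfl fun i _ => Finset.sum_congr rfl fun j _ => ?_
        rw [hAsymm j i]
        ring
      rw [hR']
      refine Finset.sum_le_sum fun i _ => ?_
      exact Finset.sum_le_sum_of_subset_of_nonneg (Finset.subset_univ _)
        (fun j _ _ => mul_nonneg (hA0 i j) (sq_nonneg _))
    linarith
  have hV2 : a * Q ≤ V := by
    rw [hQ, hV, Finset.mul_sum]
    exact Finset.sum_le_sum fun i hi =>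
      mul_le_mul_of_nonneg_right (hdS i hi) (sq_nonneg _)
  have hT0 : 0 ≤ T := by
    refine Finset.sum_nonneg fun i _ => Finset.sum_nonneg fun j _ =>
      mul_nonneg (hA0 i j) (sq_nonneg _)
  -- rewrite goal
  have hxsum : ∑ i, x i ^ 2 = Q + P := (Finset.sum_add_sum_compl S _).symm
  have hVg : ∑ i ∈ S, θ / (1 - θ) * (∑ j, A i j) * x i ^ 2 = θ / (1 - θ) * V := by
    rw [hV, Finset.mul_sum]
    exact Finset.sum_congr rfl fun i _ => by ring
  rw [hxsum, hVg]
  rw [div_mul_eq_mul_div, div_le_iff₀ hD, ← mul_le_mul_iff_right₀ h1θ]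
  have hre : (1 - θ) * ((θ / (1 - θ) * V + 1 / 2 * T) * (a + (1 - θ) * b))
      = (θ * V + (1 - θ) * (1 / 2) * T) * (a + (1 - θ) * b) := by
    field_simp
  rw [hre]
  nlinarith [mul_le_mul_of_nonneg_left hsum2 ha.le,
    mul_le_mul_of_nonneg_left hRT (by positivity : (0:ℝ) ≤ a * (1 - θ)),
    mul_le_mul_of_nonneg_left hV2 (by positivity : (0:ℝ) ≤ θ * ((1 - θ) * b)),
    mul_nonneg (mul_nonneg (mul_nonneg h1θ.le h1θ.le) hb.le) hT0]


lemma qform_eq {n : ℕ} (S : Finset (Fin n)) (c : ℝ) (A : Fin n → Fin n → ℝ)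
    (hAsymm : ∀ i j, A i j = A j i) (x : Fin n → ℝ) :
    x ⬝ᵥ ((Matrix.diagonal (fun i => if i ∈ S then c else 0) *
        Matrix.diagonal (fun i => ∑ j, A i j) +
        Matrix.diagonal (fun i => ∑ j, A i j) - Matrix.of (fun i j => A i j)) *ᵥ x)
      = (∑ i ∈ S, c * (∑ j, A i j) * x i ^ 2)
        + (1/2) * ∑ i, ∑ j, A i j * (x i - x j) ^ 2 := by
  classical
  set d : Fin n → ℝ := fun i => ∑ j, A i j with hd
  set k : Fin n → ℝ := fun i => if i ∈ S then c else 0 with hk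
  have hM : ∀ i j, (Matrix.diagonal k * Matrix.diagonal d + Matrix.diagonal d
      - Matrix.of A) i j = (if i = j then k i * d i + d i else 0) - A i j := by
    intro i j
    rw [Matrix.diagonal_mul_diagonal, Matrix.sub_apply, Matrix.add_apply]
    by_cases h : i = j <;> simp [Matrix.diagonal_apply, h]
  have hLHS : x ⬝ᵥ ((Matrix.diagonal k * Matrix.diagonal d + Matrix.diagonal d
      - Matrix.of A) *ᵥ x)
      = ∑ i, (x i * ((k i * d i + d i) * x i) - x i * ∑ j, A i j * x j) := by
    rw [dotProduct]
    refine Finset.sum_congr rfl fun i _ => ?_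
    rw [Matrix.mulVec, dotProduct]
    have : ∀ j, (Matrix.diagonal k * Matrix.diagonal d + Matrix.diagonal d
        - Matrix.of A) i j * x j = ((if i = j then k i * d i + d i else 0) - A i j) * x j :=
      fun j => by rw [hM]
    rw [Finset.sum_congr rfl fun j _ => this j]
    have hsplit : ∑ j, ((if i = j then k i * d i + d i else 0) - A i j) * x j
        = (∑ j, (if i = j then (k i * d i + d i) * x j else 0)) - ∑ j, A i j * x j := by
      rw [← Finset.sum_sub_distrib]
      refine Finset.sum_congr rfl fun j _ => ?_
      by_cases h : i = j <;> simp [h] <;> ring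
    rw [hsplit, Finset.sum_ite_eq Finset.univ i (fun j => (k i * d i + d i) * x j)]
    simp [mul_sub]
  rw [hLHS]
  -- Laplacian identity
  have lap : ∑ i, ∑ j, A i j * (x i - x j) ^ 2
      = 2 * (∑ i, d i * x i ^ 2) - 2 * ∑ i, ∑ j, A i j * (x i * x j) := by
    have e1 : ∀ i j : Fin n, A i j * (x i - x j) ^ 2
        = A i j * x i ^ 2 + A i j * x j ^ 2 - 2 * (A i j * (x i * x j)) := fun i j => by ring
    have e2 : ∑ i, ∑ j, A i j * x j ^ 2 = ∑ i, ∑ j, A i j * x i ^ 2 := by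
      rw [Finset.sum_comm]
      exact Finset.sum_congr rfl fun i _ => Finset.sum_congr rfl fun j _ => by
        rw [hAsymm j i]
    have e3 : ∀ i : Fin n, ∑ j, A i j * x i ^ 2 = d i * x i ^ 2 := fun i => by
      rw [hd]
      rw [Finset.sum_mul]
    calc ∑ i, ∑ j, A i j * (x i - x j) ^ 2
        = ∑ i, ∑ j, (A i j * x i ^ 2 + A i j * x j ^ 2 - 2 * (A i j * (x i * x j))) := by
          exact Finset.sum_congr rfl fun i _ => Finset.sum_congr rfl fun j _ => e1 i j
      _ = (∑ i, ∑ j, A i j * x i ^ 2) + (∑ i, ∑ j, A i j * x j ^ 2)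
            - 2 * ∑ i, ∑ j, A i j * (x i * x j) := by
          simp only [Finset.sum_sub_distrib, Finset.sum_add_distrib, Finset.mul_sum]
      _ = 2 * (∑ i, d i * x i ^ 2) - 2 * ∑ i, ∑ j, A i j * (x i * x j) := by
          rw [e2, Finset.sum_congr rfl fun i (_ : i ∈ Finset.univ) => e3 i]
          ring
  -- reduce k-sum to S
  have hkS : ∑ i, k i * d i * x i ^ 2 = ∑ i ∈ S, c * d i * x i ^ 2 := by
    calc ∑ i, k i * d i * x i ^ 2
        = ∑ i, (if i ∈ S then c * d i * x i ^ 2 else 0) := by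
          refine Finset.sum_congr rfl fun i _ => ?_
          rw [hk]
          by_cases h : i ∈ S <;> simp [h]
      _ = ∑ i ∈ S, c * d i * x i ^ 2 := by
          rw [Finset.sum_ite_mem, Finset.univ_inter]
  have expand : ∑ i, (x i * ((k i * d i + d i) * x i) - x i * ∑ j, A i j * x j)
      = ((∑ i, k i * d i * x i ^ 2) + (∑ i, d i * x i ^ 2))
        - ∑ i, ∑ j, A i j * (x i * x j) := by
    have e4 : ∀ i : Fin n, x i * ((k i * d i + d i) * x i) - x i * ∑ j, A i j * x j
        = (k i * d i * x i ^ 2 + d i * x i ^ 2) - ∑ j, A i j * (x i * x j) := by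
      intro i
      have h5 : x i * ∑ j, A i j * x j = ∑ j, A i j * (x i * x j) := by
        rw [Finset.mul_sum]
        exact Finset.sum_congr rfl fun j _ => by ring
      rw [h5]
      ring
    rw [Finset.sum_congr rfl fun i (_ : i ∈ Finset.univ) => e4 i]
    simp only [Finset.sum_sub_distrib, Finset.sum_add_distrib]
  rw [expand, hkS, lap]
  ring


lemma herm_M {n : ℕ} (S : Finset (Fin n)) (c : ℝ) (A : Fin n → Fin n → ℝ)
    (hAsymm : ∀ i j, A i j = A j i) :
    (Matrix.diagonal (fun i => if i ∈ S then c else 0) *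
        Matrix.diagonal (fun i => ∑ j, A i j) +
        Matrix.diagonal (fun i => ∑ j, A i j) - Matrix.of (fun i j => A i j)).IsHermitian := by
  rw [Matrix.IsHermitian]
  ext i j
  rw [Matrix.conjTranspose_apply, star_trivial, Matrix.diagonal_mul_diagonal,
    Matrix.sub_apply, Matrix.sub_apply, Matrix.add_apply, Matrix.add_apply,
    Matrix.of_apply, Matrix.of_apply, hAsymm j i]
  by_cases h : i = j <;> simp [Matrix.diagonal_apply, h, eq_comm]

/-- With probability at least `1 - n_s e^{-δ^s/8} - n_r e^{-δ^{rs}/8}`, the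
minimum eigenvalue of the random matrix `M = (I-Θ)⁻¹Θ D + D - A` of the FJ model over the
random graph `RG(V,Ψ)` is at least `(θ δ^s δ^{rs}/2)/(δ^s + (1-θ)δ^{rs})`, provided every
non-stubborn agent has positive expected stubborn degree. -/
theorem stmt_8 {Ω : Type*} [MeasurableSpace Ω] (μ : Measure Ω) [IsProbabilityMeasure μ]
    (n : ℕ) (ψ : Fin n → Fin n → ℝ)
    (hψsymm : ∀ i j, ψ i j = ψ j i) (hψdiag : ∀ i, ψ i i = 0)
    (hψmem : ∀ i j, ψ i j ∈ Set.Icc (0:ℝ) 1)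
    (a : Fin n → Fin n → Ω → ℝ)
    (hmeas : ∀ i j, Measurable (a i j))
    (hval : ∀ i j ω, a i j ω = 0 ∨ a i j ω = 1)
    (hasymm : ∀ i j ω, a i j ω = a j i ω) (hadiag : ∀ i ω, a i i ω = 0)
    (hprob : ∀ i j, i ≠ j → μ {ω | a i j ω = 1} = ENNReal.ofReal (ψ i j))
    (hind : iIndepFun
      (fun (p : {p : Fin n × Fin n // p.1 < p.2}) ω => a p.1.1 p.1.2 ω) μ)
    (S : Finset (Fin n)) (hS : S.Nonempty) (hSc : Sᶜ.Nonempty)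
    (θ : ℝ) (hθ : θ ∈ Set.Ioo (0:ℝ) 1)
    (hpos : ∀ i ∈ Sᶜ, ∃ j ∈ S, 0 < ψ i j)
    (δs δrs : ℝ)
    (hδs : δs = S.inf' hS fun i => ∑ j, ψ i j)
    (hδrs : δrs = Sᶜ.inf' hSc fun i => ∑ j ∈ S, ψ i j)
    (M : Ω → Matrix (Fin n) (Fin n) ℝ)
    (hM : ∀ ω, M ω =
      Matrix.diagonal (fun i => if i ∈ S then θ / (1 - θ) else 0) *
        Matrix.diagonal (fun i => ∑ j, a i j ω) +
        Matrix.diagonal (fun i => ∑ j, a i j ω) - Matrix.of (fun i j => a i j ω)) :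
    1 - ((S.card : ℝ) * Real.exp (-δs / 8) + (Sᶜ.card : ℝ) * Real.exp (-δrs / 8)) <
      (μ {ω | ∃ hherm : (M ω).IsHermitian,
        ∀ k, θ * δs * δrs / 2 / (δs + (1 - θ) * δrs) ≤ hherm.eigenvalues k}).toReal := by
  classical
  obtain ⟨hθ0, hθ1⟩ := hθ
  have h1θ : 0 < 1 - θ := by linarith
  have htR : 0 ≤ (μ {ω | ∃ hherm : (M ω).IsHermitian,
      ∀ k, θ * δs * δrs / 2 / (δs + (1 - θ) * δrs) ≤ hherm.eigenvalues k}).toReal :=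
    ENNReal.toReal_nonneg
  have hδrs_pos : 0 < δrs := by
    rw [hδrs, Finset.lt_inf'_iff]
    intro i hi
    obtain ⟨j, hjS, hj⟩ := hpos i hi
    exact lt_of_lt_of_le hj (Finset.single_le_sum (fun j' _ => (hψmem i j').1) hjS)
  by_cases hδs_pos : 0 < δs
  swap
  · push_neg at hδs_pos
    have e1 : (1:ℝ) ≤ Real.exp (-δs / 8) := Real.one_le_exp (by linarith)
    have e2 : (1:ℝ) ≤ (S.card : ℝ) := by
      exact_mod_cast Nat.one_le_iff_ne_zero.mpr (Finset.card_pos.mpr hS).ne'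
    have e3 : (0:ℝ) < (Sᶜ.card : ℝ) * Real.exp (-δrs / 8) := by
      have h4 : (0:ℝ) < (Sᶜ.card : ℝ) := by exact_mod_cast Finset.card_pos.mpr hSc
      positivity
    nlinarith [htR]
  -- main case
  have hDpos : 0 < δs + (1 - θ) * δrs := by nlinarith
  set bad : Fin n → Set Ω := fun i =>
    if i ∈ S then {ω | ∑ j, a i j ω ≤ (∑ j, ψ i j) / 2}
    else {ω | ∑ j ∈ S, a i j ω ≤ (∑ j ∈ S, ψ i j) / 2} with hbad
  have hmeas_bad : ∀ i, MeasurableSet (bad i) := by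
    intro i
    rw [hbad]
    by_cases h : i ∈ S
    · simp only [if_pos h]
      exact measurableSet_le (Finset.measurable_sum _ fun j _ => hmeas i j) measurable_const
    · simp only [if_neg h]
      exact measurableSet_le (Finset.measurable_sum _ fun j _ => hmeas i j) measurable_const
  -- Chernoff bound for each vertex
  have hchern : ∀ (i : Fin n) (T : Finset (Fin n)),
      (μ {ω | ∑ j ∈ T, a i j ω ≤ (∑ j ∈ T, ψ i j) / 2}).toReal
        ≤ Real.exp (-((1 - Real.log 2) / 2) * ∑ j ∈ T, ψ i j) := by
    intro i T
    set sfin := Finset.univ.filter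
      (fun q : {p : Fin n × Fin n // p.1 < p.2} =>
        (q.1.1 = i ∧ q.1.2 ∈ T) ∨ (q.1.2 = i ∧ q.1.1 ∈ T)) with hsfin
    have hψeq : ∑ p ∈ sfin, ψ p.1.1 p.1.2 = ∑ j ∈ T, ψ i j :=
      pair_sum i T ψ hψsymm (hψdiag i)
    have hset : {ω | (∑ p ∈ sfin, (fun p ω => a p.1.1 p.1.2 ω) p) ω
        ≤ (∑ p ∈ sfin, ψ p.1.1 p.1.2) / 2}
        = {ω | ∑ j ∈ T, a i j ω ≤ (∑ j ∈ T, ψ i j) / 2} := by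
      ext ω
      simp only [Set.mem_setOf_eq, Finset.sum_apply]
      rw [pair_sum i T (fun u v => a u v ω) (fun u v => hasymm u v ω) (hadiag i ω), hψeq]
    have hch := chernoff_le μ (fun p ω => a p.1.1 p.1.2 ω) hind
      (fun p => hmeas _ _) (fun p ω => hval _ _ ω)
      (fun p => ψ p.1.1 p.1.2) (fun p => hψmem _ _)
      (fun p => hprob _ _ (ne_of_lt p.2)) sfin
    rw [hset, hψeq] at hch
    exact hch
  have hlog2 : Real.log 2 < 0.6931471808 := Real.log_two_lt_d9
  have hbad_lt : ∀ i, (μ (bad i)).toReal <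
      (if i ∈ S then Real.exp (-δs / 8) else Real.exp (-δrs / 8)) := by
    intro i
    by_cases h : i ∈ S
    · simp only [hbad, if_pos h]
      have hm : δs ≤ ∑ j, ψ i j := by rw [hδs]; exact Finset.inf'_le _ h
      refine lt_of_le_of_lt (hchern i Finset.univ) ?_
      exact Real.exp_lt_exp.mpr (by nlinarith)
    · simp only [hbad, if_neg h]
      have hiSc : i ∈ Sᶜ := Finset.mem_compl.mpr h
      have hm : δrs ≤ ∑ j ∈ S, ψ i j := by rw [hδrs]; exact Finset.inf'_le _ hiSc
      refine lt_of_le_of_lt (hchern i S) ?_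
      exact Real.exp_lt_exp.mpr (by nlinarith)
  set U : Set Ω := ⋃ i, bad i with hUdef
  have hUmeas : MeasurableSet U := MeasurableSet.iUnion fun i => hmeas_bad i
  have hU_le : (μ U).toReal ≤ ∑ i, (μ (bad i)).toReal := by
    have h1 := measure_iUnion_le (μ := μ) bad
    rw [tsum_fintype] at h1
    have h2 : (∑ i, μ (bad i)) ≠ ⊤ :=
      ENNReal.sum_ne_top.mpr fun i _ => measure_ne_top μ _
    calc (μ U).toReal ≤ (∑ i, μ (bad i)).toReal := ENNReal.toReal_mono h2 h1
      _ = ∑ i, (μ (bad i)).toReal := ENNReal.toReal_sum fun i _ => measure_ne_top μ _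
  have hsum_lt : ∑ i, (μ (bad i)).toReal
      < S.card * Real.exp (-δs / 8) + Sᶜ.card * Real.exp (-δrs / 8) := by
    rw [← Finset.sum_add_sum_compl S fun i => (μ (bad i)).toReal]
    have hA : ∑ i ∈ S, (μ (bad i)).toReal < S.card * Real.exp (-δs / 8) := by
      have h3 := Finset.sum_lt_sum_of_nonempty hS
        (f := fun i => (μ (bad i)).toReal) (g := fun _ => Real.exp (-δs / 8)) ?_
      · rwa [Finset.sum_const, nsmul_eq_mul] at h3
      · intro i hi
        have h4 := hbad_lt i
        rwa [if_pos hi] at h4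
    have hB : ∑ i ∈ Sᶜ, (μ (bad i)).toReal < Sᶜ.card * Real.exp (-δrs / 8) := by
      have h3 := Finset.sum_lt_sum_of_nonempty hSc
        (f := fun i => (μ (bad i)).toReal) (g := fun _ => Real.exp (-δrs / 8)) ?_
      · rwa [Finset.sum_const, nsmul_eq_mul] at h3
      · intro i hi
        have h4 := hbad_lt i
        rwa [if_neg (Finset.mem_compl.mp hi)] at h4
    exact add_lt_add hA hB
  have hsubset : Uᶜ ⊆ {ω | ∃ hherm : (M ω).IsHermitian,
      ∀ k, θ * δs * δrs / 2 / (δs + (1 - θ) * δrs) ≤ hherm.eigenvalues k} := by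
    intro ω hω
    rw [Set.mem_compl_iff, hUdef, Set.mem_iUnion] at hω
    push_neg at hω
    have hdegS : ∀ i ∈ S, δs / 2 ≤ ∑ j, a i j ω := by
      intro i hi
      have h1 := hω i
      simp only [hbad, if_pos hi] at h1
      have h2 : ¬ (∑ j, a i j ω ≤ (∑ j, ψ i j) / 2) := h1
      have hm : δs ≤ ∑ j, ψ i j := by rw [hδs]; exact Finset.inf'_le _ hi
      push_neg at h2
      linarith
    have hdegR : ∀ i ∈ Sᶜ, δrs / 2 ≤ ∑ j ∈ S, a i j ω := by
      intro i hi
      have h1 := hω i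
      simp only [hbad, if_neg (Finset.mem_compl.mp hi)] at h1
      have h2 : ¬ (∑ j ∈ S, a i j ω ≤ (∑ j ∈ S, ψ i j) / 2) := h1
      have hm : δrs ≤ ∑ j ∈ S, ψ i j := by rw [hδrs]; exact Finset.inf'_le _ hi
      push_neg at h2
      linarith
    have hA0 : ∀ i j, 0 ≤ a i j ω := by
      intro i j
      rcases hval i j ω with h | h <;> rw [h] <;> norm_num
    have hAs : ∀ i j, a i j ω = a j i ω := fun i j => hasymm i j ω
    have hHerm : (M ω).IsHermitian := by
      rw [hM ω]
      exact herm_M S (θ / (1 - θ)) (fun i j => a i j ω) hAs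
    have hquad : ∀ x : Fin n → ℝ,
        θ * δs * δrs / 2 / (δs + (1 - θ) * δrs) * ∑ i, x i ^ 2 ≤ x ⬝ᵥ ((M ω) *ᵥ x) := by
      intro x
      rw [hM ω, qform_eq S (θ / (1 - θ)) (fun i j => a i j ω) hAs x]
      have hceq : θ * δs * δrs / 2 / (δs + (1 - θ) * δrs)
          = θ * (δs / 2) * (δrs / 2) / ((δs / 2) + (1 - θ) * (δrs / 2)) := by
        have hne : δs + (1 - θ) * δrs ≠ 0 := ne_of_gt hDpos
        rw [show (δs / 2) + (1 - θ) * (δrs / 2) = (δs + (1 - θ) * δrs) / 2 from by ring]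
        field_simp
      rw [hceq]
      exact quad_bound S (fun i j => a i j ω) hA0 hAs θ (δs / 2) (δrs / 2) hθ0 hθ1
        (by linarith) (by linarith) hdegS hdegR x
    exact ⟨hHerm, fun k => eigen_lb (M ω) hHerm _ hquad k⟩
  have hcompl : 1 - (μ U).toReal ≤ (μ {ω | ∃ hherm : (M ω).IsHermitian,
      ∀ k, θ * δs * δrs / 2 / (δs + (1 - θ) * δrs) ≤ hherm.eigenvalues k}).toReal := by
    have h1 : μ Uᶜ ≤ μ {ω | ∃ hherm : (M ω).IsHermitian,
        ∀ k, θ * δs * δrs / 2 / (δs + (1 - θ) * δrs) ≤ hherm.eigenvalues k} :=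
      measure_mono hsubset
    have h2 : (μ Uᶜ).toReal = 1 - (μ U).toReal := by
      rw [measure_compl hUmeas (measure_ne_top μ U), measure_univ]
      rw [ENNReal.toReal_sub_of_le prob_le_one ENNReal.one_ne_top, ENNReal.toReal_one]
    rw [← h2]
    exact ENNReal.toReal_mono (measure_ne_top μ _) h1
  linarith [hU_le, hsum_lt, hcompl]
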